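/- Let r > 0 and let G be a P5-free graph with nonempty disjoint subsets A, B_1, …, B_k ⊆ V(G) such that: (1) B_1, …, B_k are pairwise anticomplete and each G[B_i] is anticonnected; (2) no vertex of A is mixed on two of B_1, …, B_k; and (3) χ(A \ N_G(v)) ≤ r for all v ∈ B_1 ∪ ⋯ ∪ B_k. Then either (a) there are at least k − k^{1/2} indices i ∈ [k] for which some A_i' ⊆ A complete to B_i satisfies χ(A_i') ≥ (1 − 1/k)·χ(A) − k·r, or (b) G[A] contains a complete blockade (D_1, …, D_q) with q ≥ k^{1/2} and χ(D_j) ≥ χ(A)/k for all j ∈ [q]. -/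

import Mathlib

open SimpleGraph

/-- The chromatic number of the subgraph of `G` induced on `S`, as a natural number. -/
noncomputable def chiS {V : Type*} [Fintype V] (G : SimpleGraph V) (S : Set V) : ℕ :=
  (G.induce S).chromaticNumber.toNat

/-- A graph is `P5`-free if it has no induced subgraph isomorphic to the five-vertex path. -/
def P5Free {V : Type*} (G : SimpleGraph V) : Prop :=
  IsEmpty (SimpleGraph.pathGraph 5 ↪g G)

/-- `v` is mixed on `S`: it has both a neighbour and a nonneighbour in `S`. -/
def MixedOn {V : Type*} (G : SimpleGraph V) (v : V) (S : Set V) : Prop :=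
  (∃ s ∈ S, G.Adj v s) ∧ (∃ s ∈ S, ¬ G.Adj v s)

section helpers
variable {V : Type*} [Fintype V] (G : SimpleGraph V)

lemma colorable_chiS (S : Set V) : (G.induce S).Colorable (chiS G S) :=
  SimpleGraph.colorable_chromaticNumber_of_fintype _

lemma chiS_le {S : Set V} {n : ℕ} (h : (G.induce S).Colorable n) : chiS G S ≤ n :=
  ENat.toNat_le_of_le_coe h.chromaticNumber_le

lemma chiS_mono {S T : Set V} (h : S ⊆ T) : chiS G S ≤ chiS G T := by
  apply chiS_le
  exact SimpleGraph.Colorable.of_hom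
    (⟨⟨Set.inclusion h, Set.inclusion_injective h⟩, Iff.rfl⟩ : G.induce S ↪g G.induce T).toRelHom
    (colorable_chiS G T)

lemma chiS_union (S T : Set V) : chiS G (S ∪ T) ≤ chiS G S + chiS G T := by
  classical
  obtain ⟨c1⟩ := colorable_chiS G S
  obtain ⟨c2⟩ := colorable_chiS G T
  apply chiS_le
  have hcol : (G.induce (S ∪ T)).Coloring (Fin (chiS G S) ⊕ Fin (chiS G T)) := by
    refine SimpleGraph.Coloring.mk
      (fun x => if h : (x : V) ∈ S then Sum.inl (c1 ⟨x, h⟩)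
        else Sum.inr (c2 ⟨x, x.2.resolve_left h⟩)) ?_
    intro u v huv
    have huv' : G.Adj ↑u ↑v := huv
    split_ifs with hu hv hv
    · simp only [ne_eq, Sum.inl.injEq]
      exact c1.valid huv'
    · simp
    · simp
    · simp only [ne_eq, Sum.inr.injEq]
      exact c2.valid huv'
  have := hcol.colorable
  simpa using this

lemma chiS_empty : chiS G (∅ : Set V) ≤ 0 := by
  apply chiS_le
  exact ⟨SimpleGraph.Coloring.mk (fun x => isEmptyElim x) (fun {u} _ _ => isEmptyElim u)⟩

lemma chiS_biUnion {ι : Type*} (s : Finset ι) (f : ι → Set V) :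
    chiS G (⋃ i ∈ s, f i) ≤ ∑ i ∈ s, chiS G (f i) := by
  classical
  induction s using Finset.induction with
  | empty => simpa using chiS_empty G
  | insert _ _ hns ih =>
    rename_i a s
    rw [Finset.sum_insert hns]
    calc chiS G (⋃ i ∈ insert a s, f i) = chiS G (f a ∪ ⋃ i ∈ s, f i) := by
          rw [Finset.set_biUnion_insert]
      _ ≤ chiS G (f a) + chiS G (⋃ i ∈ s, f i) := chiS_union G _ _
      _ ≤ _ := Nat.add_le_add_left ih _

end helpers

lemma walk_flip {W : Type*} {H : SimpleGraph W} (P : W → Prop) {x y : W} (w : H.Walk x y) :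
    P x → ¬ P y → ∃ a b, H.Adj a b ∧ P a ∧ ¬ P b := by
  induction w with
  | nil => exact fun h1 h2 => absurd h1 h2
  | @cons u v' w' h p ih =>
    intro h1 h2
    by_cases hm : P v'
    · exact ih hm h2
    · exact ⟨u, v', h, h1, hm⟩

lemma mixed_pair {V : Type*} {G : SimpleGraph V} {B : Set V} (hc : ((G.induce B)ᶜ).Connected)
    {v : V} (h1 : ∃ s ∈ B, G.Adj v s) (h2 : ∃ s ∈ B, ¬ G.Adj v s) :
    ∃ p ∈ B, ∃ q ∈ B, ¬ G.Adj p q ∧ G.Adj v p ∧ ¬ G.Adj v q := by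
  obtain ⟨s, hs, hvs⟩ := h1
  obtain ⟨t, ht, hvt⟩ := h2
  obtain ⟨w⟩ := hc.preconnected ⟨s, hs⟩ ⟨t, ht⟩
  obtain ⟨a, b, hab, ha, hb⟩ := walk_flip (fun x : B => G.Adj v ↑x) w hvs hvt
  rw [SimpleGraph.compl_adj] at hab
  exact ⟨a, a.2, b, b.2, fun h => hab.2 h, ha, hb⟩

lemma no_induced_P5 {V : Type*} {G : SimpleGraph V} (hP5 : P5Free G)
    {v0 v1 v2 v3 v4 : V}
    (e01 : G.Adj v0 v1) (e12 : G.Adj v1 v2) (e23 : G.Adj v2 v3) (e34 : G.Adj v3 v4)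
    (n02 : ¬ G.Adj v0 v2) (n03 : ¬ G.Adj v0 v3) (n04 : ¬ G.Adj v0 v4)
    (n13 : ¬ G.Adj v1 v3) (n14 : ¬ G.Adj v1 v4) (n24 : ¬ G.Adj v2 v4)
    (d02 : v0 ≠ v2) (d03 : v0 ≠ v3) (d04 : v0 ≠ v4)
    (d13 : v1 ≠ v3) (d14 : v1 ≠ v4) (d24 : v2 ≠ v4) : False := by
  have d01 := e01.ne
  have d12 := e12.ne
  have d23 := e23.ne
  have d34 := e34.ne
  have e10 := e01.symm
  have e21 := e12.symm
  have e32 := e23.symm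
  have e43 := e34.symm
  have n20 : ¬ G.Adj v2 v0 := fun h => n02 h.symm
  have n30 : ¬ G.Adj v3 v0 := fun h => n03 h.symm
  have n40 : ¬ G.Adj v4 v0 := fun h => n04 h.symm
  have n31 : ¬ G.Adj v3 v1 := fun h => n13 h.symm
  have n41 : ¬ G.Adj v4 v1 := fun h => n14 h.symm
  have n42 : ¬ G.Adj v4 v2 := fun h => n24 h.symm
  have d20 := d02.symm
  have d30 := d03.symm
  have d40 := d04.symm
  have d31 := d13.symm
  have d41 := d14.symm
  have d42 := d24.symm
  have d10 := d01.symm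
  have d21 := d12.symm
  have d32 := d23.symm
  have d43 := d34.symm
  refine hP5.elim ⟨⟨![v0, v1, v2, v3, v4], ?_⟩, ?_⟩
  · intro a b hab
    fin_cases a <;> fin_cases b <;> simp_all
  · intro a b
    show G.Adj (![v0, v1, v2, v3, v4] a) (![v0, v1, v2, v3, v4] b) ↔ _
    fin_cases a <;> fin_cases b <;>
      simp_all [SimpleGraph.pathGraph_adj, Function.Embedding.coeFn_mk] <;> decide

theorem stmt_9 {V : Type*} [Fintype V] (G : SimpleGraph V) (hP5 : P5Free G)
    (r : ℝ) (hr : 0 < r) (k : ℕ) (hk : 1 ≤ k)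
    (A : Set V) (Bf : Fin k → Set V)
    (hAne : A.Nonempty) (hBne : ∀ i, (Bf i).Nonempty)
    (hdAB : ∀ i, Disjoint A (Bf i))
    (hdBB : ∀ i j, i ≠ j → Disjoint (Bf i) (Bf j))
    (hanti : ∀ i j, i ≠ j → ∀ a ∈ Bf i, ∀ b ∈ Bf j, ¬ G.Adj a b)
    (hanticonn : ∀ i, ((G.induce (Bf i))ᶜ).Connected)
    (hmix : ∀ a ∈ A, ∀ i j, i ≠ j → ¬ (MixedOn G a (Bf i) ∧ MixedOn G a (Bf j)))
    (hcov : ∀ i, ∀ v ∈ Bf i, (chiS G (A \ G.neighborSet v) : ℝ) ≤ r) :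
    (∃ I : Finset (Fin k), (k : ℝ) - Real.sqrt k ≤ (I.card : ℝ) ∧
      ∀ i ∈ I, ∃ A' ⊆ A, (∀ a ∈ A', ∀ b ∈ Bf i, G.Adj a b) ∧
        (1 - 1 / (k : ℝ)) * (chiS G A : ℝ) - k * r ≤ (chiS G A' : ℝ)) ∨
    (∃ (q : ℕ) (D : Fin q → Set V), Real.sqrt k ≤ (q : ℝ) ∧
      (∀ j, D j ⊆ A) ∧
      (∀ i j, i ≠ j → Disjoint (D i) (D j)) ∧
      (∀ i j, i ≠ j → ∀ a ∈ D i, ∀ b ∈ D j, G.Adj a b) ∧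
      ∀ j, (chiS G A : ℝ) / k ≤ (chiS G (D j) : ℝ)) := by
  classical
  have hkpos : (0:ℝ) < k := by exact_mod_cast hk
  set c : ℕ := chiS G A with hcdef
  set v : Fin k → V := fun i => (hBne i).choose with hvdef
  have hvB : ∀ i, v i ∈ Bf i := fun i => (hBne i).choose_spec
  set Gd : Finset (Fin k) := Finset.univ.filter (fun i => ∃ A' ⊆ A,
      (∀ a ∈ A', ∀ b ∈ Bf i, G.Adj a b) ∧
      (1 - 1 / (k : ℝ)) * (c : ℝ) - k * r ≤ (chiS G A' : ℝ)) with hGddef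
  by_cases hgood : (k : ℝ) - Real.sqrt k ≤ Gd.card
  · exact Or.inl ⟨Gd, hgood, fun i hi => (Finset.mem_filter.mp hi).2⟩
  push_neg at hgood
  right
  set bad : Finset (Fin k) := Gdᶜ with hbaddef
  set F : Fin k → Set V := fun i => {a | a ∈ A ∧ ∀ b ∈ Bf i, G.Adj a b} with hFdef
  set D : Fin k → Set V := fun i => {a | a ∈ A ∧ MixedOn G a (Bf i) ∧
      ∀ j ∈ bad, j ≠ i → ∀ b ∈ Bf j, G.Adj a b} with hDdef
  have hDsubA : ∀ i, D i ⊆ A := fun i a ha => ha.1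
  -- key chromatic bound on bad indices
  have key : ∀ i ∈ bad, (c : ℝ) / k ≤ (chiS G (D i) : ℝ) := by
    intro i hi
    have hFbad : (chiS G (F i) : ℝ) < (1 - 1 / (k : ℝ)) * (c : ℝ) - k * r := by
      have hnot : i ∉ Gd := Finset.mem_compl.mp hi
      rw [hGddef, Finset.mem_filter] at hnot
      push_neg at hnot
      exact hnot (Finset.mem_univ i) (F i) (fun a ha => ha.1) (fun a ha => ha.2)
    have hcover : A ⊆ F i ∪ (D i ∪ ⋃ j ∈ bad, (A \ G.neighborSet (v j))) := by
      intro a ha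
      by_cases hcomp : ∀ b ∈ Bf i, G.Adj a b
      · exact Or.inl ⟨ha, hcomp⟩
      push_neg at hcomp
      obtain ⟨b0, hb0, hab0⟩ := hcomp
      by_cases hmixi : MixedOn G a (Bf i)
      · by_cases hD : ∀ j ∈ bad, j ≠ i → ∀ b ∈ Bf j, G.Adj a b
        · exact Or.inr (Or.inl ⟨ha, hmixi, hD⟩)
        · push_neg at hD
          obtain ⟨j, hj, hji, b1, hb1, hab1⟩ := hD
          have hnm : ¬ MixedOn G a (Bf j) :=
            fun hmj => hmix a ha i j hji.symm ⟨hmixi, hmj⟩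
          have hno : ∀ s ∈ Bf j, ¬ G.Adj a s :=
            fun s hs hadj => hnm ⟨⟨s, hs, hadj⟩, ⟨b1, hb1, hab1⟩⟩
          refine Or.inr (Or.inr (Set.mem_biUnion hj ⟨ha, fun hmem => ?_⟩))
          have hadj : G.Adj (v j) a := hmem
          exact hno (v j) (hvB j) hadj.symm
      · have hno : ∀ s ∈ Bf i, ¬ G.Adj a s :=
          fun s hs hadj => hmixi ⟨⟨s, hs, hadj⟩, ⟨b0, hb0, hab0⟩⟩
        refine Or.inr (Or.inr (Set.mem_biUnion hi ⟨ha, fun hmem => ?_⟩))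
        have hadj : G.Adj (v i) a := hmem
        exact hno (v i) (hvB i) hadj.symm
    have h1 : c ≤ chiS G (F i) + (chiS G (D i) +
        chiS G (⋃ j ∈ bad, (A \ G.neighborSet (v j)))) :=
      le_trans (chiS_mono G hcover)
        (le_trans (chiS_union G _ _) (Nat.add_le_add_left (chiS_union G _ _) _))
    have h2 : chiS G (⋃ j ∈ bad, (A \ G.neighborSet (v j))) ≤
        ∑ j ∈ bad, chiS G (A \ G.neighborSet (v j)) := chiS_biUnion G _ _
    have h0 : c ≤ chiS G (F i) + (chiS G (D i) +
        ∑ j ∈ bad, chiS G (A \ G.neighborSet (v j))) :=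
      le_trans h1 (Nat.add_le_add_left (Nat.add_le_add_left h2 _) _)
    have hA : (c : ℝ) ≤ (chiS G (F i) : ℝ) + ((chiS G (D i) : ℝ) +
        ∑ j ∈ bad, (chiS G (A \ G.neighborSet (v j)) : ℝ)) := by
      exact_mod_cast h0
    have h3 : (∑ j ∈ bad, (chiS G (A \ G.neighborSet (v j)) : ℝ)) ≤ bad.card * r := by
      calc (∑ j ∈ bad, (chiS G (A \ G.neighborSet (v j)) : ℝ)) ≤ ∑ _j ∈ bad, r :=
            Finset.sum_le_sum (fun j _ => hcov j (v j) (hvB j))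
        _ = bad.card * r := by rw [Finset.sum_const, nsmul_eq_mul]
    have hbk : (bad.card : ℝ) ≤ k := by
      have : bad.card ≤ k := le_trans (Finset.card_le_univ bad) (by simp)
      exact_mod_cast this
    have h4 : (bad.card : ℝ) * r ≤ k * r := mul_le_mul_of_nonneg_right hbk hr.le
    have hid : (1 - 1 / (k : ℝ)) * (c : ℝ) = (c : ℝ) - (c : ℝ) / k := by ring
    linarith
  -- build blockade from bad indices
  have hbadcard : Real.sqrt k ≤ (bad.card : ℝ) := by
    have h5 : Gd.card + bad.card = k := by
      have := Finset.card_add_card_compl Gd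
      simpa [hbaddef] using this
    have h6 : (Gd.card : ℝ) + (bad.card : ℝ) = k := by exact_mod_cast h5
    linarith
  have hcomplete : ∀ i ∈ bad, ∀ j ∈ bad, i ≠ j → ∀ a ∈ D i, ∀ b ∈ D j, G.Adj a b := by
    intro i hi j hj hij a haD b hbD
    by_contra hab
    obtain ⟨haA, hamix, haC⟩ := haD
    obtain ⟨hbA, hbmix, hbC⟩ := hbD
    have haCj : ∀ x ∈ Bf j, G.Adj a x := haC j hj hij.symm
    have hbCi : ∀ x ∈ Bf i, G.Adj b x := hbC i hi hij
    obtain ⟨q0, hq0, haq0⟩ := hamix.2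
    obtain ⟨p', hp'B, q', hq'B, hpq', hbp', hbq'⟩ :=
      mixed_pair (hanticonn j) hbmix.1 hbmix.2
    have e01 : G.Adj q0 b := (hbCi q0 hq0).symm
    have e12 : G.Adj b p' := hbp'
    have e23 : G.Adj p' a := (haCj p' hp'B).symm
    have e34 : G.Adj a q' := haCj q' hq'B
    have n02 : ¬ G.Adj q0 p' := hanti i j hij q0 hq0 p' hp'B
    have n03 : ¬ G.Adj q0 a := fun h => haq0 h.symm
    have n04 : ¬ G.Adj q0 q' := hanti i j hij q0 hq0 q' hq'B
    have n13 : ¬ G.Adj b a := fun h => hab h.symm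
    have n14 : ¬ G.Adj b q' := hbq'
    have n24 : ¬ G.Adj p' q' := hpq'
    have d02 : q0 ≠ p' := by
      intro h; exact Set.disjoint_left.mp (hdBB i j hij) hq0 (h ▸ hp'B)
    have d03 : q0 ≠ a := by
      intro h; exact Set.disjoint_left.mp (hdAB i) haA (h ▸ hq0)
    have d04 : q0 ≠ q' := by
      intro h; exact Set.disjoint_left.mp (hdBB i j hij) hq0 (h ▸ hq'B)
    have d13 : b ≠ a := by
      intro h; exact haq0 (h ▸ hbCi q0 hq0)
    have d14 : b ≠ q' := by
      intro h; exact Set.disjoint_left.mp (hdAB j) hbA (h ▸ hq'B)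
    have d24 : p' ≠ q' := by
      intro h; exact hbq' (h ▸ hbp')
    exact no_induced_P5 hP5 e01 e12 e23 e34 n02 n03 n04 n13 n14 n24
      d02 d03 d04 d13 d14 d24
  refine ⟨bad.card, fun m => D ((bad.equivFin.symm m : ↥bad) : Fin k), hbadcard,
    fun m => hDsubA _, ?_, ?_, ?_⟩
  · intro m m' hne
    have hne' : ((bad.equivFin.symm m : ↥bad) : Fin k) ≠
        ((bad.equivFin.symm m' : ↥bad) : Fin k) := by
      intro h
      exact hne (bad.equivFin.symm.injective (Subtype.ext h))
    rw [Set.disjoint_left]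
    intro a haD haD'
    exact hmix a (hDsubA _ haD) _ _ hne' ⟨haD.2.1, haD'.2.1⟩
  · intro m m' hne a haD b hbD
    have hne' : ((bad.equivFin.symm m : ↥bad) : Fin k) ≠
        ((bad.equivFin.symm m' : ↥bad) : Fin k) := by
      intro h
      exact hne (bad.equivFin.symm.injective (Subtype.ext h))
    exact hcomplete _ (bad.equivFin.symm m).2 _ (bad.equivFin.symm m').2 hne' a haD b hbD
  · intro m
    exact key _ (bad.equivFin.symm m).2
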